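/- Truth lemma direction for C^i_j via paths (left-to-right): if C^i_j φ ∈ Φ and C^i_j φ ∈ Γ for a maximal consistent set Γ in Φ, then for every C^i_j-path Γ_0, ..., Γ_n with Γ_0 = Γ (where consecutive sets are related by C(R_j) ∘ C(≡^i_j)), φ ∈ Γ_k for all k. -/

import Mathlib

inductive Form (P G : Type) : Type
  | atom : P → Form P G
  | neg  : Form P G → Form P G
  | and  : Form P G → Form P G → Form P G
  | Aw   : G → G → Form P G → Form P G
  | L    : G → Form P G → Form P G
  | box  : G → G → Form P G → Form P G
  | C    : G → G → Form P G → Form P G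
  | K    : G → G → Form P G → Form P G

namespace Form

variable {P G : Type}

/-- Implication, defined from negation and conjunction. -/
def imp (φ ψ : Form P G) : Form P G := .neg (.and φ (.neg ψ))

/-- The set of atomic propositions occurring in a formula. -/
def At : Form P G → Set P
  | atom p => {p}
  | neg φ => φ.At
  | and φ ψ => φ.At ∪ ψ.At
  | Aw _ _ φ => φ.At
  | L _ φ => φ.At
  | box _ _ φ => φ.At
  | C _ _ φ => φ.At
  | K _ _ φ => φ.At

end Form

variable {P G : Type}

namespace Form

/-- The set `sub(ψ)` of subformulas of a formula (including itself). -/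
def sub : Form P G → Set (Form P G)
  | atom p => {atom p}
  | neg φ => insert (neg φ) φ.sub
  | and φ ψ => insert (and φ ψ) (φ.sub ∪ ψ.sub)
  | Aw i j φ => insert (Aw i j φ) φ.sub
  | L j φ => insert (L j φ) φ.sub
  | box i j φ => insert (box i j φ) φ.sub
  | C i j φ => insert (C i j φ) φ.sub
  | K i j φ => insert (K i j φ) φ.sub

/-- A formula is a negation if it is of the form `¬ψ`. -/
def isNeg : Form P G → Prop
  | neg _ => True
  | _ => False

end Form

/-- The closure `cl(φ)` (Definition 4), as the smallest set of formulas
containing `φ` and closed under the conditions 1–11. -/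
inductive Cl (φ : Form P G) : Form P G → Prop
  /- 1. φ ∈ cl(φ) -/
  | root : Cl φ φ
  /- 2. closure under subformulas -/
  | subf {ψ χ} : Cl φ ψ → χ ∈ ψ.sub → Cl φ χ
  /- 3. single negations -/
  | negc {ψ} : Cl φ ψ → ¬ ψ.isNeg → Cl φ (Form.neg ψ)
  /- 4. atoms -/
  | atomA {p} (i j : G) : Cl φ (Form.atom p) → Cl φ (Form.Aw i j (Form.atom p))
  | atomAA {p} (i j : G) : Cl φ (Form.atom p) →
      Cl φ (Form.and (Form.Aw i i (Form.atom p)) (Form.Aw i j (Form.atom p)))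
  | atomBox {p} (i j : G) : Cl φ (Form.atom p) → Cl φ (Form.box i j (Form.atom p))
  /- 5. awareness formulas -/
  | awL {i j ψ} (k : G) : Cl φ (Form.Aw i j ψ) → Cl φ (Form.L k (Form.Aw i j ψ))
  | awSub {i j ψ χ} : Cl φ (Form.Aw i j ψ) → χ ∈ ψ.sub → Cl φ (Form.Aw i j χ)
  /- 6. L_j ψ ∈ sub(φ) -/
  | lPos {j ψ} : Form.L j ψ ∈ φ.sub → Cl φ (Form.L j (Form.L j ψ))
  | lNeg {j ψ} : Form.L j ψ ∈ φ.sub → Cl φ (Form.L j (Form.neg (Form.L j ψ)))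
  /- 7. [≡]^i_j ψ ∈ sub(φ) -/
  | boxPos {i j ψ} : Form.box i j ψ ∈ φ.sub → Cl φ (Form.box i j (Form.box i j ψ))
  | boxNeg {i j ψ} : Form.box i j ψ ∈ φ.sub → Cl φ (Form.box i j (Form.neg (Form.box i j ψ)))
  /- 8. C^i_j ψ -/
  | cMix {i j ψ} : Cl φ (Form.C i j ψ) → Cl φ (Form.box i j (Form.L j (Form.C i j ψ)))
  /- 9. L_k O ψ for O ∈ {A^i_j, C^i_j} -/
  | lAwPos {k i j ψ} : Cl φ (Form.L k (Form.Aw i j ψ)) →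
      Cl φ (Form.L k (Form.L k (Form.Aw i j ψ)))
  | lAwNeg {k i j ψ} : Cl φ (Form.L k (Form.Aw i j ψ)) →
      Cl φ (Form.L k (Form.neg (Form.L k (Form.Aw i j ψ))))
  | lCPos {k i j ψ} : Cl φ (Form.L k (Form.C i j ψ)) →
      Cl φ (Form.L k (Form.L k (Form.C i j ψ)))
  | lCNeg {k i j ψ} : Cl φ (Form.L k (Form.C i j ψ)) →
      Cl φ (Form.L k (Form.neg (Form.L k (Form.C i j ψ))))
  /- 10. [≡]^i_j L_j C^i_j ψ -/
  | blcPos {i j ψ} : Cl φ (Form.box i j (Form.L j (Form.C i j ψ))) →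
      Cl φ (Form.box i j (Form.box i j (Form.L j (Form.C i j ψ))))
  | blcNeg {i j ψ} : Cl φ (Form.box i j (Form.L j (Form.C i j ψ))) →
      Cl φ (Form.box i j (Form.neg (Form.box i j (Form.L j (Form.C i j ψ)))))
  /- 11. K^i_j ψ -/
  | kAw {i j ψ} : Cl φ (Form.K i j ψ) → Cl φ (Form.Aw i j ψ)
  | kC {i j ψ} : Cl φ (Form.K i j ψ) → Cl φ (Form.C i j ψ)

namespace Form
/-- Biconditional. -/
def iff' (φ ψ : Form P G) : Form P G := Form.and (φ.imp ψ) (ψ.imp φ)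
end Form

/-- A formula is a propositional tautology if it is true under every boolean
valuation of formulas that respects negation and conjunction (so all
non-boolean formulas are treated as atoms). -/
def IsTaut (φ : Form P G) : Prop :=
  ∀ v : Form P G → Bool, (∀ ψ, v (Form.neg ψ) = !(v ψ)) →
    (∀ ψ χ, v (Form.and ψ χ) = (v ψ && v χ)) → v φ = true

/-- The Hilbert system ALP (Table 1). -/
inductive Prov : Form P G → Prop
  | taut {φ} : IsTaut φ → Prov φ
  | AN (i j : G) (φ) : Prov ((Form.Aw i j φ).iff' (Form.Aw i j (Form.neg φ)))
  | AC (i j : G) (φ ψ) :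
      Prov ((Form.Aw i j (Form.and φ ψ)).iff' (Form.and (Form.Aw i j φ) (Form.Aw i j ψ)))
  | AA (i j k l : G) (φ) : Prov ((Form.Aw i j φ).iff' (Form.Aw i j (Form.Aw k l φ)))
  | AEq (i j k l : G) (φ) : Prov ((Form.Aw i j φ).iff' (Form.Aw i j (Form.box k l φ)))
  | ACM (i j k l : G) (φ) : Prov ((Form.Aw i j φ).iff' (Form.Aw i j (Form.C k l φ)))
  | AL (i j k : G) (φ) : Prov ((Form.Aw i j φ).iff' (Form.Aw i j (Form.L k φ)))
  | AK (i j k l : G) (φ) : Prov ((Form.Aw i j φ).iff' (Form.Aw i j (Form.K k l φ)))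
  | ANEq (i j : G) (p : P) :
      Prov ((Form.and (Form.Aw i j (Form.atom p)) (Form.atom p)).imp (Form.box i j (Form.atom p)))
  | KL (j : G) (φ ψ) : Prov ((Form.L j (φ.imp ψ)).imp ((Form.L j φ).imp (Form.L j ψ)))
  | TL (j : G) (φ) : Prov ((Form.L j φ).imp φ)
  | fiveL (j : G) (φ) : Prov ((Form.neg (Form.L j φ)).imp (Form.L j (Form.neg (Form.L j φ))))
  | KEq (i j : G) (φ ψ) :
      Prov ((Form.box i j (φ.imp ψ)).imp ((Form.box i j φ).imp (Form.box i j ψ)))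
  | TEq (i j : G) (φ) : Prov ((Form.box i j φ).imp φ)
  | fiveEq (i j : G) (φ) :
      Prov ((Form.neg (Form.box i j φ)).imp (Form.box i j (Form.neg (Form.box i j φ))))
  | KC (i j : G) (φ ψ : Form P G) : Prov ((Form.C i j (φ.imp ψ)).imp ((Form.C i j φ).imp (Form.C i j ψ)))
  | MIX (i j : G) (φ : Form P G) :
      Prov ((Form.C i j φ).imp (Form.and φ (Form.box i j (Form.L j (Form.C i j φ)))))
  | IND (i j : G) (φ : Form P G) :
      Prov ((Form.C i j (φ.imp (Form.box i j (Form.L j φ)))).imp (φ.imp (Form.C i j φ)))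
  | KAC (i j : G) (φ : Form P G) : Prov ((Form.K i j φ).iff' (Form.and (Form.Aw i j φ) (Form.C i j φ)))
  | mp {φ ψ : Form P G} : Prov (φ.imp ψ) → Prov φ → Prov ψ
  | LG (j : G) {φ} : Prov φ → Prov (Form.L j φ)
  | EqG (i j : G) {φ} : Prov φ → Prov (Form.box i j φ)
  | CG (i j : G) {φ} : Prov φ → Prov (Form.C i j φ)

/-- `Γ ⊢ φ`: some finite list of members of `Γ`, taken as hypotheses, yields a
proof of `φ` in ALP. -/
def Derives (Γ : Set (Form P G)) (φ : Form P G) : Prop :=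
  ∃ L : List (Form P G), (∀ ψ ∈ L, ψ ∈ Γ) ∧ Prov (L.foldr Form.imp φ)

/-- `Γ ⊬ ⊥`: `Γ` does not derive a contradiction. -/
def Consistent (Γ : Set (Form P G)) : Prop :=
  ¬ ∃ φ, Derives Γ φ ∧ Derives Γ (Form.neg φ)

/-- A maximal consistent set in `Φ`: a consistent `Γ ⊆ Φ` such that no
consistent subset of `Φ` strictly contains it. -/
def MCSin (Φ Γ : Set (Form P G)) : Prop :=
  Γ ⊆ Φ ∧ Consistent Γ ∧ ∀ Γ', Γ ⊂ Γ' → Γ' ⊆ Φ → ¬ Consistent Γ'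

/-- The canonical relation `C(≡^i_j)`: `{φ : [≡]^i_j φ ∈ w} ⊆ v`. -/
def CEq (i j : G) (w v : Set (Form P G)) : Prop :=
  ∀ φ : Form P G, Form.box i j φ ∈ w → φ ∈ v

/-- The canonical relation `C(R_j)`: `{φ : L_j φ ∈ w} ⊆ v`. -/
def CR (j : G) (w v : Set (Form P G)) : Prop :=
  ∀ φ : Form P G, Form.L j φ ∈ w → φ ∈ v

/-- One step of a `C^i_j`-path: the composition `C(R_j) ∘ C(≡^i_j)`
(first a `C(≡^i_j)`-step, then a `C(R_j)`-step), through a canonical world. -/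
def canComp (Φ : Set (Form P G)) (i j : G) (w v : Set (Form P G)) : Prop :=
  ∃ u, MCSin Φ u ∧ CEq i j w u ∧ CR j u v

section Aux
variable {P G : Type}

lemma t_id (X : Form P G) : Prov (X.imp X) := by
  apply Prov.taut; intro v hn ha
  simp only [Form.imp, hn, ha]; cases v X <;> simp

lemma t_K (X Y : Form P G) : Prov (X.imp (Y.imp X)) := by
  apply Prov.taut; intro v hn ha
  simp only [Form.imp, hn, ha]; cases v X <;> cases v Y <;> simp

lemma t_B (a X Y : Form P G) : Prov ((X.imp Y).imp ((a.imp X).imp (a.imp Y))) := by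
  apply Prov.taut; intro v hn ha
  simp only [Form.imp, hn, ha]; cases v a <;> cases v X <;> cases v Y <;> simp

lemma t_W (a X T : Form P G) : Prov ((X.imp T).imp (X.imp (a.imp T))) := by
  apply Prov.taut; intro v hn ha
  simp only [Form.imp, hn, ha]; cases v a <;> cases v X <;> cases v T <;> simp

lemma t4 (a A B C : Form P G) :
    Prov ((A.imp (B.imp C)).imp ((a.imp A).imp ((a.imp B).imp (a.imp C)))) := by
  apply Prov.taut; intro v hn ha
  simp only [Form.imp, hn, ha]
  cases v a <;> cases v A <;> cases v B <;> cases v C <;> simp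

lemma t_andL (X Y : Form P G) : Prov ((X.and Y).imp X) := by
  apply Prov.taut; intro v hn ha
  simp only [Form.imp, hn, ha]; cases v X <;> cases v Y <;> simp

lemma t_andR (X Y : Form P G) : Prov ((X.and Y).imp Y) := by
  apply Prov.taut; intro v hn ha
  simp only [Form.imp, hn, ha]; cases v X <;> cases v Y <;> simp

lemma prov_mono {X Y : Form P G} (h : Prov (X.imp Y)) (L : List (Form P G)) :
    Prov ((L.foldr Form.imp X).imp (L.foldr Form.imp Y)) := by
  induction L with
  | nil => exact h
  | cons a t ih => exact Prov.mp (t_B a _ _) ih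

lemma prov_weakL (L : List (Form P G)) (X : Form P G) :
    Prov (X.imp (L.foldr Form.imp X)) := by
  induction L with
  | nil => exact t_id X
  | cons a t ih => exact Prov.mp (t_W a _ _) ih

lemma prov_foldr_S (L : List (Form P G)) (X Y : Form P G) :
    Prov ((L.foldr Form.imp (X.imp Y)).imp
      ((L.foldr Form.imp X).imp (L.foldr Form.imp Y))) := by
  induction L with
  | nil => exact t_id _
  | cons a t ih => exact Prov.mp (t4 a _ _ _) ih

lemma prov_weaken_app_left (L1 : List (Form P G)) {L2 : List (Form P G)} {X : Form P G}
    (h : Prov (L2.foldr Form.imp X)) : Prov ((L1 ++ L2).foldr Form.imp X) := by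
  induction L1 with
  | nil => exact h
  | cons a t ih => exact Prov.mp (t_K _ a) ih

lemma prov_weaken_app_right {L1 : List (Form P G)} (L2 : List (Form P G)) {X : Form P G}
    (h : Prov (L1.foldr Form.imp X)) : Prov ((L1 ++ L2).foldr Form.imp X) := by
  rw [List.foldr_append]
  exact Prov.mp (prov_mono (prov_weakL L2 X) L1) h

lemma Derives.mp' {Γ : Set (Form P G)} {φ ψ : Form P G}
    (h1 : Derives Γ (φ.imp ψ)) (h2 : Derives Γ φ) : Derives Γ ψ := by
  obtain ⟨L1, hL1, hp1⟩ := h1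
  obtain ⟨L2, hL2, hp2⟩ := h2
  refine ⟨L1 ++ L2, ?_, ?_⟩
  · intro χ hχ
    rcases List.mem_append.1 hχ with h | h
    · exact hL1 _ h
    · exact hL2 _ h
  · exact Prov.mp (Prov.mp (prov_foldr_S _ _ _) (prov_weaken_app_right L2 hp1))
      (prov_weaken_app_left L1 hp2)

lemma prov_derives {Γ : Set (Form P G)} {φ : Form P G} (h : Prov φ) : Derives Γ φ :=
  ⟨[], by intro _ h; exact absurd h List.not_mem_nil, h⟩

lemma mem_derives {Γ : Set (Form P G)} {φ : Form P G} (h : φ ∈ Γ) : Derives Γ φ :=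
  ⟨[φ], by intro ψ hψ; simp at hψ; subst hψ; exact h, t_id φ⟩

lemma derives_cut {Γ Δ : Set (Form P G)} {χ : Form P G}
    (hall : ∀ ψ ∈ Δ, Derives Γ ψ) (h : Derives Δ χ) : Derives Γ χ := by
  obtain ⟨L, hL, hp⟩ := h
  have hd : Derives Γ (L.foldr Form.imp χ) := prov_derives hp
  clear hp
  induction L with
  | nil => exact hd
  | cons a t ih =>
    exact ih (fun ψ h => hL ψ (List.mem_cons_of_mem _ h))
      (hd.mp' (hall a (hL a List.mem_cons_self)))

lemma mcs_mem {Φ Γ : Set (Form P G)} (h : MCSin Φ Γ) {φ : Form P G}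
    (hd : Derives Γ φ) (hΦ : φ ∈ Φ) : φ ∈ Γ := by
  by_contra hne
  refine h.2.2 (insert φ Γ) (Set.ssubset_insert hne) (Set.insert_subset hΦ h.1) ?_
  have cut : ∀ {χ : Form P G}, Derives (insert φ Γ) χ → Derives Γ χ := by
    intro χ hχ
    refine derives_cut ?_ hχ
    intro ψ hψ
    rcases hψ with rfl | hψ
    · exact hd
    · exact mem_derives hψ
  rintro ⟨χ, h1, h2⟩
  exact h.2.1 ⟨χ, cut h1, cut h2⟩

lemma form_sub_self (ψ : Form P G) : ψ ∈ ψ.sub := by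
  cases ψ <;> simp [Form.sub]

end Aux

/-- truth lemma direction for `C^i_j` via paths, left-to-right:
if `C^i_j ψ ∈ Φ` and `C^i_j ψ ∈ Γ` for a maximal consistent set `Γ` in the
closure `Φ`, then every `C^i_j`-path `Γ_0, …, Γ_n` from `Γ` is a `ψ`-path:
`ψ ∈ Γ_k` for all `k ≤ n`. -/
theorem C_path_truth (φ0 : Form P G) (Φ : Set (Form P G))
    (hΦ : Φ = {χ | Cl φ0 χ}) (i j : G) (ψ : Form P G)
    (hψΦ : Form.C i j ψ ∈ Φ) (Γ : Set (Form P G)) (hΓ : MCSin Φ Γ)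
    (hψΓ : Form.C i j ψ ∈ Γ) :
    ∀ (n : ℕ) (f : ℕ → Set (Form P G)), f 0 = Γ →
      (∀ k, MCSin Φ (f k)) →
      (∀ k < n, canComp Φ i j (f k) (f (k + 1))) →
      ∀ k ≤ n, ψ ∈ f k := by
  intro n f hf0 hMCS hsteps
  have hψΦ' : ψ ∈ Φ := by
    rw [hΦ] at hψΦ ⊢
    exact Cl.subf hψΦ (by simp [Form.sub, form_sub_self])
  have hboxΦ : Form.box i j (Form.L j (Form.C i j ψ)) ∈ Φ := by
    rw [hΦ] at hψΦ ⊢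
    exact Cl.cMix hψΦ
  have hmix : ∀ k, Form.C i j ψ ∈ f k →
      Derives (f k) (Form.and ψ (Form.box i j (Form.L j (Form.C i j ψ)))) := by
    intro k hC
    exact (prov_derives (Prov.MIX i j ψ)).mp' (mem_derives hC)
  have key : ∀ k, k ≤ n → Form.C i j ψ ∈ f k := by
    intro k
    induction k with
    | zero => intro _; rw [hf0]; exact hψΓ
    | succ k ih =>
      intro hk
      have hk' : k < n := Nat.lt_of_succ_le hk
      have hCk : Form.C i j ψ ∈ f k := ih (le_of_lt hk')
      have hbox : Form.box i j (Form.L j (Form.C i j ψ)) ∈ f k :=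
        mcs_mem (hMCS k) ((prov_derives (t_andR _ _)).mp' (hmix k hCk)) hboxΦ
      obtain ⟨u, hu, hEq, hR⟩ := hsteps k hk'
      exact hR _ (hEq _ hbox)
  intro k hk
  exact mcs_mem (hMCS k) ((prov_derives (t_andL _ _)).mp' (hmix k (key k hk))) hψΦ'
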